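/- HOP(2^⟨3⟩, 6, 6) has a solution; that is, for n = 9, s = 3 and (m_1, m_2) = (3, 3), there is a family of γ = 24 I-alternating (K_2^⟨3⟩, C_6, C_6)-factors of K_18 such that every non-I edge of K_18 lies in exactly one factor. (In the paper this is stated as: 4K_9^• admits an HOP (C_3, C_3)-decomposition, which by the paper's Theorem 3.2 is equivalent to the stated HOP solution.) -/

import Mathlib

/-- The vertex set of the complete graph `K_{2n}`: the `n` couples are indexed by `Fin n`,
and the two members of a couple by `Fin 2`. -/
abbrev HOPVertex (n : ℕ) : Type := Fin n × Fin 2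

/-- The spouse of a participant: the other member of the same couple. -/
def HOPspouse {n : ℕ} (v : HOPVertex n) : HOPVertex n := (v.1, v.2 + 1)

/-- An edge of `K_{2n}` is an `I`-edge (an edge of the distinguished perfect matching `I`)
if it joins a participant to their spouse. -/
def IsIEdge {n : ℕ} (e : Sym2 (HOPVertex n)) : Prop :=
  ∃ v, e = s(v, HOPspouse v)

/-- An `I`-alternating `(K_2^⟨s⟩, C_{2m_1}, …, C_{2m_t})`-factor of `K_{2n}`:
a spanning subgraph of `K_{2n}` which is a vertex-disjoint union of `s` edges of `I`
(one for each `a : Fin s`, namely the edge joining `pair a` to its spouse) together with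
`t` cycles, the `i`-th of which has length `2 * m i` (given by the cyclic vertex sequence
`cyc i : ZMod (2 * m i) → HOPVertex n`), such that along each cycle the edges alternate
between `I`-edges (at even positions) and non-`I`-edges (at odd positions).
The field `spanning` says that the listed vertices are pairwise distinct and exhaust the
whole vertex set; in particular each `cyc i` is injective, so it really traces a cycle. -/
structure HOPFactor (n s t : ℕ) (m : Fin t → ℕ) : Type where
  pair : Fin s → HOPVertex n
  cyc : (i : Fin t) → ZMod (2 * m i) → HOPVertex n
  alt_even : ∀ (i : Fin t) (j : ZMod (2 * m i)),
      j.val % 2 = 0 → cyc i (j + 1) = HOPspouse (cyc i j)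
  alt_odd : ∀ (i : Fin t) (j : ZMod (2 * m i)),
      j.val % 2 = 1 → ¬ IsIEdge s(cyc i j, cyc i (j + 1))
  spanning : Function.Bijective
      (Sum.elim
        (fun a : Fin s × Fin 2 => if a.2 = 0 then pair a.1 else HOPspouse (pair a.1))
        (fun x : (i : Fin t) × ZMod (2 * m i) => cyc x.1 x.2))

/-- The edge set of an `I`-alternating `(K_2^⟨s⟩, C_{2m_1}, …, C_{2m_t})`-factor. -/
def HOPFactor.edges {n s t : ℕ} {m : Fin t → ℕ} (F : HOPFactor n s t m) :
    Set (Sym2 (HOPVertex n)) :=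
  {e | (∃ a : Fin s, e = s(F.pair a, HOPspouse (F.pair a))) ∨
    ∃ (i : Fin t) (j : ZMod (2 * m i)), e = s(F.cyc i j, F.cyc i (j + 1))}

/-- A solution to the generalized Honeymoon Oberwolfach Problem
`HOP(2^⟨s⟩, 2 m_1, …, 2 m_t)`: a family of `γ` `I`-alternating
`(K_2^⟨s⟩, C_{2m_1}, …, C_{2m_t})`-factors of `K_{2n}`, where `γ` is the natural number
with `γ * (m_1 + ⋯ + m_t) = 2n(n-1)`, such that every edge of `K_{2n}` that is not an
`I`-edge lies in exactly one factor of the family. -/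
def HOPSolution (n s t : ℕ) (m : Fin t → ℕ) : Prop :=
  ∃ γ : ℕ, γ * (∑ i, m i) = 2 * n * (n - 1) ∧
    ∃ F : Fin γ → HOPFactor n s t m,
      ∀ e : Sym2 (HOPVertex n), ¬ e.IsDiag → ¬ IsIEdge e →
        ∃! k : Fin γ, e ∈ (F k).edges


def hopP : Fin 24 → Fin 3 → Fin 9 :=
  ![![3, 4, 5],
    ![3, 7, 8],
    ![0, 1, 3],
    ![1, 2, 7],
    ![0, 2, 3],
    ![3, 4, 6],
    ![1, 5, 6],
    ![0, 5, 8],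
    ![0, 4, 8],
    ![2, 5, 7],
    ![1, 2, 8],
    ![1, 3, 8],
    ![2, 4, 6],
    ![1, 5, 8],
    ![1, 4, 7],
    ![0, 6, 7],
    ![0, 2, 8],
    ![2, 5, 6],
    ![3, 4, 7],
    ![3, 6, 7],
    ![4, 5, 8],
    ![0, 6, 7],
    ![1, 5, 6],
    ![0, 2, 4]]

def hopC : Fin 24 → Fin 2 → Fin 6 → HOPVertex 9 :=
  ![
    ![![(0, 1), (0, 0), (1, 0), (1, 1), (2, 1), (2, 0)],
      ![(6, 1), (6, 0), (7, 1), (7, 0), (8, 1), (8, 0)]],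
    ![![(0, 0), (0, 1), (1, 0), (1, 1), (6, 1), (6, 0)],
      ![(2, 1), (2, 0), (4, 1), (4, 0), (5, 1), (5, 0)]],
    ![![(2, 1), (2, 0), (6, 0), (6, 1), (7, 1), (7, 0)],
      ![(4, 0), (4, 1), (5, 0), (5, 1), (8, 1), (8, 0)]],
    ![![(0, 0), (0, 1), (3, 0), (3, 1), (5, 0), (5, 1)],
      ![(4, 1), (4, 0), (6, 1), (6, 0), (8, 1), (8, 0)]],
    ![![(1, 0), (1, 1), (4, 1), (4, 0), (8, 1), (8, 0)],
      ![(5, 1), (5, 0), (6, 1), (6, 0), (7, 0), (7, 1)]],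
    ![![(0, 1), (0, 0), (2, 1), (2, 0), (8, 1), (8, 0)],
      ![(1, 0), (1, 1), (5, 0), (5, 1), (7, 0), (7, 1)]],
    ![![(0, 1), (0, 0), (3, 1), (3, 0), (7, 0), (7, 1)],
      ![(2, 0), (2, 1), (4, 0), (4, 1), (8, 1), (8, 0)]],
    ![![(1, 1), (1, 0), (2, 1), (2, 0), (6, 1), (6, 0)],
      ![(3, 1), (3, 0), (4, 0), (4, 1), (7, 1), (7, 0)]],
    ![![(1, 0), (1, 1), (5, 1), (5, 0), (7, 1), (7, 0)],
      ![(2, 1), (2, 0), (3, 0), (3, 1), (6, 1), (6, 0)]],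
    ![![(0, 1), (0, 0), (4, 1), (4, 0), (6, 0), (6, 1)],
      ![(1, 0), (1, 1), (3, 0), (3, 1), (8, 0), (8, 1)]],
    ![![(0, 0), (0, 1), (4, 1), (4, 0), (7, 0), (7, 1)],
      ![(3, 1), (3, 0), (5, 0), (5, 1), (6, 1), (6, 0)]],
    ![![(0, 0), (0, 1), (4, 0), (4, 1), (6, 0), (6, 1)],
      ![(2, 0), (2, 1), (5, 1), (5, 0), (7, 0), (7, 1)]],
    ![![(0, 0), (0, 1), (1, 1), (1, 0), (5, 1), (5, 0)],
      ![(3, 1), (3, 0), (7, 1), (7, 0), (8, 0), (8, 1)]],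
    ![![(0, 1), (0, 0), (2, 0), (2, 1), (7, 1), (7, 0)],
      ![(3, 0), (3, 1), (4, 0), (4, 1), (6, 1), (6, 0)]],
    ![![(0, 0), (0, 1), (2, 1), (2, 0), (3, 1), (3, 0)],
      ![(5, 0), (5, 1), (6, 0), (6, 1), (8, 1), (8, 0)]],
    ![![(1, 1), (1, 0), (3, 1), (3, 0), (8, 1), (8, 0)],
      ![(2, 0), (2, 1), (4, 1), (4, 0), (5, 0), (5, 1)]],
    ![![(1, 1), (1, 0), (4, 0), (4, 1), (7, 0), (7, 1)],
      ![(3, 0), (3, 1), (5, 1), (5, 0), (6, 0), (6, 1)]],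
    ![![(0, 0), (0, 1), (3, 1), (3, 0), (8, 0), (8, 1)],
      ![(1, 1), (1, 0), (4, 1), (4, 0), (7, 1), (7, 0)]],
    ![![(0, 0), (0, 1), (5, 1), (5, 0), (8, 1), (8, 0)],
      ![(1, 0), (1, 1), (2, 0), (2, 1), (6, 1), (6, 0)]],
    ![![(0, 1), (0, 0), (4, 0), (4, 1), (5, 1), (5, 0)],
      ![(1, 1), (1, 0), (2, 0), (2, 1), (8, 0), (8, 1)]],
    ![![(0, 1), (0, 0), (1, 1), (1, 0), (6, 1), (6, 0)],
      ![(2, 0), (2, 1), (3, 0), (3, 1), (7, 1), (7, 0)]],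
    ![![(1, 1), (1, 0), (3, 0), (3, 1), (4, 1), (4, 0)],
      ![(2, 1), (2, 0), (5, 0), (5, 1), (8, 0), (8, 1)]],
    ![![(0, 1), (0, 0), (7, 0), (7, 1), (8, 0), (8, 1)],
      ![(2, 0), (2, 1), (3, 1), (3, 0), (4, 1), (4, 0)]],
    ![![(1, 0), (1, 1), (3, 1), (3, 0), (5, 1), (5, 0)],
      ![(6, 0), (6, 1), (7, 0), (7, 1), (8, 1), (8, 0)]]]

instance hopNeZero (i : Fin 2) : NeZero (2 * ![3, 3] i) :=
  ⟨by fin_cases i <;> decide⟩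

def hopCyc (k : Fin 24) : (i : Fin 2) → ZMod (2 * ![3, 3] i) → HOPVertex 9
  | 0, j => hopC k 0 j
  | 1, j => hopC k 1 j

lemma hopA : ∀ (k : Fin 24) (i : Fin 2) (j : ZMod (2 * ![3, 3] i)),
    j.val % 2 = 0 → hopCyc k i (j + 1) = HOPspouse (hopCyc k i j) := by decide

/-- Lemma 6.3: `HOP(2^⟨3⟩, 6, 6)` has a solution (for `n = 9`, `s = 3`,
`(m₁, m₂) = (3, 3)`, with `γ = 24` factors). -/


instance {n : ℕ} (e : Sym2 (HOPVertex n)) : Decidable (IsIEdge e) :=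
  inferInstanceAs (Decidable (∃ v, e = s(v, HOPspouse v)))

lemma hopB : ∀ (k : Fin 24) (i : Fin 2) (j : ZMod (2 * ![3, 3] i)),
    j.val % 2 = 1 → ¬ IsIEdge s(hopCyc k i j, hopCyc k i (j + 1)) := by decide

lemma hopSpan : ∀ k : Fin 24, Function.Bijective
    (Sum.elim
      (fun a : Fin 3 × Fin 2 =>
        if a.2 = 0 then ((hopP k a.1, 0) : HOPVertex 9) else HOPspouse (hopP k a.1, 0))
      (fun x : (i : Fin 2) × ZMod (2 * ![3, 3] i) => hopCyc k x.1 x.2)) := by decide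

def hopO : Fin 24 → Fin 2 → Fin 3 → Sym2 (HOPVertex 9) :=
  ![
    ![![s((0, 0), (1, 0)), s((1, 1), (2, 1)), s((2, 0), (0, 1))],
      ![s((6, 0), (7, 1)), s((7, 0), (8, 1)), s((8, 0), (6, 1))]],
    ![![s((0, 1), (1, 0)), s((1, 1), (6, 1)), s((6, 0), (0, 0))],
      ![s((2, 0), (4, 1)), s((4, 0), (5, 1)), s((5, 0), (2, 1))]],
    ![![s((2, 0), (6, 0)), s((6, 1), (7, 1)), s((7, 0), (2, 1))],
      ![s((4, 1), (5, 0)), s((5, 1), (8, 1)), s((8, 0), (4, 0))]],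
    ![![s((0, 1), (3, 0)), s((3, 1), (5, 0)), s((5, 1), (0, 0))],
      ![s((4, 0), (6, 1)), s((6, 0), (8, 1)), s((8, 0), (4, 1))]],
    ![![s((1, 1), (4, 1)), s((4, 0), (8, 1)), s((8, 0), (1, 0))],
      ![s((5, 0), (6, 1)), s((6, 0), (7, 0)), s((7, 1), (5, 1))]],
    ![![s((0, 0), (2, 1)), s((2, 0), (8, 1)), s((8, 0), (0, 1))],
      ![s((1, 1), (5, 0)), s((5, 1), (7, 0)), s((7, 1), (1, 0))]],
    ![![s((0, 0), (3, 1)), s((3, 0), (7, 0)), s((7, 1), (0, 1))],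
      ![s((2, 1), (4, 0)), s((4, 1), (8, 1)), s((8, 0), (2, 0))]],
    ![![s((1, 0), (2, 1)), s((2, 0), (6, 1)), s((6, 0), (1, 1))],
      ![s((3, 0), (4, 0)), s((4, 1), (7, 1)), s((7, 0), (3, 1))]],
    ![![s((1, 1), (5, 1)), s((5, 0), (7, 1)), s((7, 0), (1, 0))],
      ![s((2, 0), (3, 0)), s((3, 1), (6, 1)), s((6, 0), (2, 1))]],
    ![![s((0, 0), (4, 1)), s((4, 0), (6, 0)), s((6, 1), (0, 1))],
      ![s((1, 1), (3, 0)), s((3, 1), (8, 0)), s((8, 1), (1, 0))]],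
    ![![s((0, 1), (4, 1)), s((4, 0), (7, 0)), s((7, 1), (0, 0))],
      ![s((3, 0), (5, 0)), s((5, 1), (6, 1)), s((6, 0), (3, 1))]],
    ![![s((0, 1), (4, 0)), s((4, 1), (6, 0)), s((6, 1), (0, 0))],
      ![s((2, 1), (5, 1)), s((5, 0), (7, 0)), s((7, 1), (2, 0))]],
    ![![s((0, 1), (1, 1)), s((1, 0), (5, 1)), s((5, 0), (0, 0))],
      ![s((3, 0), (7, 1)), s((7, 0), (8, 0)), s((8, 1), (3, 1))]],
    ![![s((0, 0), (2, 0)), s((2, 1), (7, 1)), s((7, 0), (0, 1))],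
      ![s((3, 1), (4, 0)), s((4, 1), (6, 1)), s((6, 0), (3, 0))]],
    ![![s((0, 1), (2, 1)), s((2, 0), (3, 1)), s((3, 0), (0, 0))],
      ![s((5, 1), (6, 0)), s((6, 1), (8, 1)), s((8, 0), (5, 0))]],
    ![![s((1, 0), (3, 1)), s((3, 0), (8, 1)), s((8, 0), (1, 1))],
      ![s((2, 1), (4, 1)), s((4, 0), (5, 0)), s((5, 1), (2, 0))]],
    ![![s((1, 0), (4, 0)), s((4, 1), (7, 0)), s((7, 1), (1, 1))],
      ![s((3, 1), (5, 1)), s((5, 0), (6, 0)), s((6, 1), (3, 0))]],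
    ![![s((0, 1), (3, 1)), s((3, 0), (8, 0)), s((8, 1), (0, 0))],
      ![s((1, 0), (4, 1)), s((4, 0), (7, 1)), s((7, 0), (1, 1))]],
    ![![s((0, 1), (5, 1)), s((5, 0), (8, 1)), s((8, 0), (0, 0))],
      ![s((1, 1), (2, 0)), s((2, 1), (6, 1)), s((6, 0), (1, 0))]],
    ![![s((0, 0), (4, 0)), s((4, 1), (5, 1)), s((5, 0), (0, 1))],
      ![s((1, 0), (2, 0)), s((2, 1), (8, 0)), s((8, 1), (1, 1))]],
    ![![s((0, 0), (1, 1)), s((1, 0), (6, 1)), s((6, 0), (0, 1))],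
      ![s((2, 1), (3, 0)), s((3, 1), (7, 1)), s((7, 0), (2, 0))]],
    ![![s((1, 0), (3, 0)), s((3, 1), (4, 1)), s((4, 0), (1, 1))],
      ![s((2, 0), (5, 0)), s((5, 1), (8, 0)), s((8, 1), (2, 1))]],
    ![![s((0, 0), (7, 0)), s((7, 1), (8, 0)), s((8, 1), (0, 1))],
      ![s((2, 1), (3, 1)), s((3, 0), (4, 1)), s((4, 0), (2, 0))]],
    ![![s((1, 1), (3, 1)), s((3, 0), (5, 1)), s((5, 0), (1, 0))],
      ![s((6, 1), (7, 0)), s((7, 1), (8, 1)), s((8, 0), (6, 0))]]]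

def hopPhi (x : Fin 24 × Fin 2 × Fin 3) : Sym2 (HOPVertex 9) := hopO x.1 x.2.1 x.2.2

def hopLit : List ℕ :=
  [2, 59, 22, 231, 269, 250, 20, 67, 12, 81, 155, 100, 84, 249, 104, 172, 215, 160, 24, 136, 11, 157, 233, 178, 63, 161, 52, 193, 230, 213, 5, 89, 34, 64, 212, 51, 7, 122, 33, 98, 179, 88, 41, 85, 66, 116, 177, 140, 65, 195, 50, 78, 139, 102, 9, 156, 31, 60, 142, 53, 27, 158, 15, 118, 211, 138, 26, 174, 13, 101, 194, 87, 21, 47, 10, 123, 268, 143, 4, 105, 32, 134, 175, 120, 23, 79, 6, 210, 251, 196, 43, 125, 70, 99, 154, 83, 44, 176, 69, 137, 192, 121, 25, 124, 17, 45, 159, 68, 29, 197, 16, 58, 103, 48, 8, 173, 28, 40, 106, 71, 3, 49, 30, 96, 141, 86, 42, 135, 62, 82, 214, 107, 14, 286, 35, 97, 117, 80, 61, 119, 46, 248, 287, 232]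

def vcode (u : HOPVertex 9) : ℕ := 2 * u.1.val + u.2.val

def enc : Sym2 (HOPVertex 9) → ℕ :=
  Sym2.lift ⟨fun u v => min (vcode u) (vcode v) * 18 + max (vcode u) (vcode v),
    fun a b => by
      show min (vcode a) (vcode b) * 18 + max (vcode a) (vcode b) = _
      rw [min_comm, max_comm]⟩

def hopIdx (x : Fin 24 × Fin 2 × Fin 3) : ℕ := x.1.val * 6 + x.2.1.val * 3 + x.2.2.val


def allX : List (Fin 24 × Fin 2 × Fin 3) :=
  (List.finRange 24).flatMap fun k => (List.finRange 2).flatMap fun i =>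
    (List.finRange 3).map fun l => (k, i, l)

lemma allX_mem : ∀ x : Fin 24 × Fin 2 × Fin 3, x ∈ allX := by
  rintro ⟨k, i, l⟩
  simp [allX]

set_option maxRecDepth 100000 in
set_option maxHeartbeats 4000000 in
lemma hMapLit : allX.map (fun x => enc (hopPhi x)) = hopLit := by decide

set_option maxRecDepth 100000 in
set_option maxHeartbeats 4000000 in
lemma hNodup : hopLit.Nodup := by decide

set_option maxRecDepth 100000 in
set_option maxHeartbeats 4000000 in
lemma hopL1 : ∀ (k : Fin 24) (i : Fin 2) (j : ZMod (2 * ![3, 3] i)), j.val % 2 = 1 →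
    ∃ l : Fin 3, s(hopCyc k i j, hopCyc k i (j + 1)) = hopO k i l := by decide

set_option maxRecDepth 100000 in
set_option maxHeartbeats 4000000 in
lemma hopL2 : ∀ (k : Fin 24) (i : Fin 2) (l : Fin 3),
    ∃ j : ZMod (2 * ![3, 3] i), hopO k i l = s(hopCyc k i j, hopCyc k i (j + 1)) := by decide

set_option maxRecDepth 100000 in
set_option maxHeartbeats 4000000 in
lemma hopSurjLit : ∀ u v : HOPVertex 9, u.1 ≠ v.1 → enc s(u, v) ∈ hopLit := by decide


lemma vcode_lt (u : HOPVertex 9) : vcode u < 18 := by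
  have h1 := u.1.isLt; have h2 := u.2.isLt
  unfold vcode; omega

lemma vcode_inj : Function.Injective vcode := by
  rintro ⟨u1, u2⟩ ⟨w1, w2⟩ h
  have h1 := u1.isLt; have h2 := u2.isLt
  have h3 := w1.isLt; have h4 := w2.isLt
  unfold vcode at h; dsimp at h
  have : u1.val = w1.val ∧ u2.val = w2.val := by omega
  exact Prod.ext (Fin.ext this.1) (Fin.ext this.2)

lemma enc_mk (u v : HOPVertex 9) :
    enc s(u, v) = min (vcode u) (vcode v) * 18 + max (vcode u) (vcode v) := rfl

lemma enc_inj (u v u' v' : HOPVertex 9) (h : enc s(u, v) = enc s(u', v')) :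
    s(u, v) = s(u', v') := by
  rw [enc_mk, enc_mk] at h
  have b1 := vcode_lt u; have b2 := vcode_lt v
  have b3 := vcode_lt u'; have b4 := vcode_lt v'
  have hcase : (vcode u = vcode u' ∧ vcode v = vcode v') ∨
      (vcode u = vcode v' ∧ vcode v = vcode u') := by omega
  rcases hcase with ⟨h1, h2⟩ | ⟨h1, h2⟩
  · rw [vcode_inj h1, vcode_inj h2]
  · rw [vcode_inj h1, vcode_inj h2, Sym2.eq_swap]


lemma hopPhi_inj : Function.Injective hopPhi := by
  intro x y h
  have d : (allX.map fun x => enc (hopPhi x)).Nodup := hMapLit ▸ hNodup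
  exact List.inj_on_of_nodup_map d (allX_mem x) (allX_mem y) (congrArg enc h)

lemma hopSurj (u v : HOPVertex 9) (h : u.1 ≠ v.1) : ∃ x, hopPhi x = s(u, v) := by
  have hm : enc s(u, v) ∈ allX.map fun x => enc (hopPhi x) := by
    rw [hMapLit]; exact hopSurjLit u v h
  obtain ⟨x, -, hx⟩ := List.mem_map.1 hm
  refine ⟨x, ?_⟩
  have : ∀ e : Sym2 (HOPVertex 9), enc e = enc s(u, v) → e = s(u, v) := by
    intro e
    induction e using Sym2.ind with
    | _ a b => exact enc_inj a b u v
  exact this _ hx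

/-- Lemma 6.3: `HOP(2^⟨3⟩, 6, 6)` has a solution. -/
theorem hop_C3_C3_nine : HOPSolution 9 3 2 ![3, 3] := by
  refine ⟨24, by decide, fun k =>
    ⟨fun a => (hopP k a, 0), hopCyc k, hopA k, hopB k, hopSpan k⟩, ?_⟩
  intro e hd hi
  induction e using Sym2.ind with
  | _ u v =>
  have huv : u.1 ≠ v.1 := by
    intro h
    rcases u with ⟨u1, u2⟩; rcases v with ⟨v1, v2⟩
    dsimp at h; subst h
    have : u2 = v2 ∨ v2 = u2 + 1 := by fin_cases u2 <;> fin_cases v2 <;> simp <;> rfl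
    rcases this with h2 | h2
    · subst h2; exact hd (by simp [Sym2.mk_isDiag_iff])
    · exact hi ⟨(u1, u2), by rw [HOPspouse, h2]⟩
  obtain ⟨⟨k, i, l⟩, hx⟩ := hopSurj u v huv
  refine ⟨k, Or.inr ?_, ?_⟩
  · obtain ⟨j, hj⟩ := hopL2 k i l
    exact ⟨i, j, by rw [← hx]; exact hj⟩
  · rintro k' (⟨a, ha⟩ | ⟨i', j, hj⟩)
    · exact absurd ⟨_, ha⟩ hi
    · dsimp only at hj
      rcases Nat.mod_two_eq_zero_or_one j.val with h0 | h1
      · exact absurd ⟨_, by rw [hj, hopA k' i' j h0]⟩ hi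
      · obtain ⟨l', hl'⟩ := hopL1 k' i' j h1
        have heq : hopPhi (k', i', l') = hopPhi (k, i, l) := by
          show hopO k' i' l' = hopO k i l
          rw [← hl', ← hj, ← hx]
          rfl
        have := hopPhi_inj heq
        exact congrArg Prod.fst this
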